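/- Let v = (v_1, …, v_n) be a finite sequence of nonnegative reals and let 1 ≤ i ≤ n−1 be an index with v_i > v_{i+1}. Let v' be the sequence obtained from v by swapping the entries at positions i and i+1. Then for every threshold t ≥ 0, pick(v', t) ≤ pick(v, t); that is, swapping an adjacent inverted pair never increases the value selected by the threshold rule. -/
import Mathlib


open MeasureTheory ProbabilityTheory

/-- `pick v t` returns `v i` for the least index `i` with `v i ≥ t`, and `0` if no
such index exists. -/
noncomputable def pick {n : ℕ} (v : Fin n → ℝ) (t : ℝ) : ℝ :=
  if h : (Finset.univ.filter (fun i => t ≤ v i)).Nonempty then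
    v ((Finset.univ.filter (fun i => t ≤ v i)).min' h)
  else 0

/-- The realized maximum `M(X)(ω) = max_i X_i(ω)` of an instance. -/
noncomputable def instMax {Ω : Type*} {n : ℕ} (X : Fin n → Ω → ℝ) (ω : Ω) : ℝ :=
  ⨆ i, X i ω

/-- `OPT(X) = E[max_i X_i]`. -/
noncomputable def OPT {Ω : Type*} {m : MeasurableSpace Ω} (μ : Measure Ω) {n : ℕ}
    (X : Fin n → Ω → ℝ) : ℝ :=
  ∫ ω, instMax X ω ∂μ

/-- `TAL(X, τ) = E[pick((X_1,…,X_n), τ)]`: the expected value of the threshold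
algorithm with threshold `τ`. -/
noncomputable def TAL {Ω : Type*} {m : MeasurableSpace Ω} (μ : Measure Ω) {n : ℕ}
    (X : Fin n → Ω → ℝ) (τ : ℝ) : ℝ :=
  ∫ ω, pick (fun i => X i ω) τ ∂μ

/-- `TAL_α(X, τ) = E[pick((X_1,…,X_n), max(τ, α·M))]`: the expected value of the
prediction-augmented threshold algorithm with base threshold `τ` and prediction
quality `α`. -/
noncomputable def TALpred {Ω : Type*} {m : MeasurableSpace Ω} (μ : Measure Ω) (α : ℝ)
    {n : ℕ} (X : Fin n → Ω → ℝ) (τ : ℝ) : ℝ :=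
  ∫ ω, pick (fun i => X i ω) (max τ (α * instMax X ω)) ∂μ

/-- The SC-threshold `η(I) = sup{τ ≥ 0 : TAL(I, τ) ≥ τ}`. -/
noncomputable def SCthreshold {Ω : Type*} {m : MeasurableSpace Ω} (μ : Measure Ω)
    {n : ℕ} (X : Fin n → Ω → ℝ) : ℝ :=
  sSup {τ : ℝ | 0 ≤ τ ∧ τ ≤ TAL μ X τ}

/-- Swapping an adjacent inverted pair never increases the value selected by the
threshold rule. -/
theorem stmt19 {n : ℕ} (v : Fin n → ℝ) (hv : ∀ i, 0 ≤ v i)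
    (i : ℕ) (hi : i + 1 < n)
    (hinv : v ⟨i + 1, hi⟩ < v ⟨i, by omega⟩)
    (t : ℝ) (ht : 0 ≤ t) :
    pick (v ∘ Equiv.swap (⟨i, by omega⟩ : Fin n) ⟨i + 1, hi⟩) t ≤ pick v t := by
  set i₀ : Fin n := ⟨i, by omega⟩ with hi₀
  set i₁ : Fin n := ⟨i + 1, hi⟩ with hi₁
  set σ := Equiv.swap i₀ i₁ with hσ
  have hne01 : i₀ ≠ i₁ := by simp [hi₀, hi₁, Fin.ext_iff]
  have hσ0 : σ i₀ = i₁ := Equiv.swap_apply_left _ _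
  have hσ1 : σ i₁ = i₀ := Equiv.swap_apply_right _ _
  have hσother : ∀ j : Fin n, j ≠ i₀ → j ≠ i₁ → σ j = j := fun j h1 h2 =>
    Equiv.swap_apply_of_ne_of_ne h1 h2
  have memF : ∀ j : Fin n, j ∈ Finset.univ.filter (fun k => t ≤ v k) ↔ t ≤ v j := by
    intro j; simp
  have memF' : ∀ j : Fin n,
      j ∈ Finset.univ.filter (fun k => t ≤ (v ∘ σ) k) ↔ t ≤ v (σ j) := by
    intro j; simp
  by_cases h : (Finset.univ.filter (fun k => t ≤ v k)).Nonempty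
  · have h' : (Finset.univ.filter (fun k => t ≤ (v ∘ σ) k)).Nonempty := by
      obtain ⟨j, hj⟩ := h
      refine ⟨σ j, (memF' _).2 ?_⟩
      simpa [hσ, Equiv.swap_apply_self] using (memF j).1 hj
    rw [pick, pick, dif_pos h', dif_pos h]
    set a := (Finset.univ.filter (fun k => t ≤ v k)).min' h with ha
    set a' := (Finset.univ.filter (fun k => t ≤ (v ∘ σ) k)).min' h' with ha'
    have haF : t ≤ v a := (memF _).1 (Finset.min'_mem _ h)
    have haF' : t ≤ v (σ a') := (memF' _).1 (Finset.min'_mem _ h')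
    have hamin : ∀ j : Fin n, t ≤ v j → a ≤ j := fun j hj =>
      Finset.min'_le _ _ ((memF j).2 hj)
    have hamin' : ∀ j : Fin n, t ≤ v (σ j) → a' ≤ j := fun j hj =>
      Finset.min'_le _ _ ((memF' j).2 hj)
    show v (σ a') ≤ v a
    by_cases h0 : a' = i₀
    · -- σ a' = i₁
      have hσa : σ a' = i₁ := by rw [h0, hσ0]
      have hvt1 : t ≤ v i₁ := by rw [← hσa]; exact haF'
      have hvt0 : t ≤ v i₀ := le_of_lt (lt_of_le_of_lt hvt1 hinv)
      have : a = i₀ := by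
        have hle : a ≤ i₀ := hamin _ hvt0
        by_contra hne
        have hlt : a < i₀ := lt_of_le_of_ne hle hne
        have hane1 : a ≠ i₁ := by
          intro hh; rw [hh] at hlt
          exact absurd hlt (by simp [hi₀, hi₁, Fin.lt_def])
        have : a' ≤ a := hamin' a (by rw [hσother a (Ne.symm (ne_of_lt hlt).symm) hane1]; exact haF)
        rw [h0] at this
        exact absurd (lt_of_le_of_lt this hlt) (lt_irrefl _)
      rw [this, hσa]
      exact le_of_lt hinv
    · by_cases h1 : a' = i₁
      · have hσa : σ a' = i₀ := by rw [h1, hσ1]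
        have hvt0 : t ≤ v i₀ := by rw [← hσa]; exact haF'
        have : a = i₀ := by
          have hle : a ≤ i₀ := hamin _ hvt0
          by_contra hne
          have hlt : a < i₀ := lt_of_le_of_ne hle hne
          have hane1 : a ≠ i₁ := by
            intro hh; rw [hh] at hlt
            exact absurd hlt (by simp [hi₀, hi₁, Fin.lt_def])
          have : a' ≤ a := hamin' a (by rw [hσother a (ne_of_lt hlt) hane1]; exact haF)
          rw [h1] at this
          have hlt' : a < i₁ := lt_trans hlt (by simp [hi₀, hi₁, Fin.lt_def])
          exact absurd (lt_of_le_of_lt this hlt') (lt_irrefl _)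
        rw [this, hσa]
      · -- a' ∉ {i₀, i₁}
        have hσa : σ a' = a' := hσother a' h0 h1
        have hvt : t ≤ v a' := by rw [← hσa]; exact haF'
        have hle : a ≤ a' := hamin _ hvt
        -- show a ∉ {i₀, i₁}
        have ha0 : a ≠ i₀ := by
          intro hh
          -- then i₀ < a' and a' ≤ i₁, contradiction
          have hlt : i₀ < a' := lt_of_le_of_ne (hh ▸ hle) (Ne.symm h0)
          have hle1 : a' ≤ i₁ := hamin' i₁ (by rw [hσ1, ← hh]; exact haF)
          have h2 : (i : ℕ) < (a' : ℕ) := by simpa [hi₀, Fin.lt_def] using hlt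
          have h3 : (a' : ℕ) ≤ i + 1 := by simpa [hi₁, Fin.le_def] using hle1
          exact h1 (Fin.ext (by simp only [hi₁]; omega))
        have ha1 : a ≠ i₁ := by
          intro hh
          have hvt1 : t ≤ v i₁ := hh ▸ haF
          have hvt0 : t ≤ v i₀ := le_of_lt (lt_of_le_of_lt hvt1 hinv)
          have : a ≤ i₀ := hamin _ hvt0
          rw [hh] at this
          exact absurd this (by simp [hi₀, hi₁, Fin.le_def])
        have : a' ≤ a := hamin' a (by rw [hσother a ha0 ha1]; exact haF)
        have : a = a' := le_antisymm hle this
        rw [hσa, ← this]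
  · have h' : ¬ (Finset.univ.filter (fun k => t ≤ (v ∘ σ) k)).Nonempty := by
      intro hc
      obtain ⟨j, hj⟩ := hc
      exact h ⟨σ j, (memF _).2 ((memF' j).1 hj)⟩
    rw [pick, pick, dif_neg h', dif_neg h]
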